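/- For even n ≥ 4 and m = n/2, g₂(1) > g₁(1), where g₁(1) = (3/8)Σ_{k=1}^{n−1} 1/sin(kπ/n) and g₂(1) = (1/4)Σ_{k=1}^{m} cos θ_k/sin³(θ_k/2), θ_k = (2k−1)π/n. -/

import Mathlib

set_option maxHeartbeats 2000000

open Real Finset

lemma sin_ge_of_between {x c : ℝ} (h1 : 0 ≤ x) (h2 : x ≤ π)
    (hcx : c ≤ x) (hcx' : c ≤ π - x) : 2 / π * c ≤ Real.sin x := by
  have hπ := Real.pi_pos
  have h2π : (0:ℝ) ≤ 2/π := by positivity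
  rcases le_or_gt x (π/2) with h | h
  · exact le_trans (mul_le_mul_of_nonneg_left hcx h2π) (Real.mul_le_sin h1 h)
  · rw [← Real.sin_pi_sub]
    exact le_trans (mul_le_mul_of_nonneg_left hcx' h2π)
      (Real.mul_le_sin (by linarith) (by linarith))

theorem stmt_14 (n m : ℕ) (hn : 4 ≤ n) (hm : n = 2 * m) :
    (3/8 : ℝ) * ∑ k ∈ Finset.range (n-1), 1 / Real.sin ((k+1 : ℝ) * Real.pi / n)
      <
    (1/4 : ℝ) * ∑ k ∈ Finset.range m,
        Real.cos ((2*(k : ℝ)+1) * Real.pi / n) /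
          (Real.sin ((2*(k : ℝ)+1) * Real.pi / n / 2))^3 := by
  have hπ := Real.pi_pos
  have hπ1 : (3.14 : ℝ) < π := Real.pi_gt_d2
  have hπ2 : π < 3.15 := Real.pi_lt_d2
  have hπ3 : π^3 < 250047/8000 := by nlinarith [sq_nonneg π, sq_nonneg (π - 3.15)]
  have hm2 : 2 ≤ m := by omega
  have hN4 : (4:ℝ) ≤ (n:ℝ) := by exact_mod_cast hn
  have hN0 : (0:ℝ) < n := by linarith
  have hNne : (n:ℝ) ≠ 0 := ne_of_gt hN0
  have hNm : (n:ℝ) = 2 * m := by exact_mod_cast hm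
  have hm0 : (0:ℝ) < m := by rw [hNm] at hN4; linarith
  -- LHS bound
  have hLHS : ∑ k ∈ Finset.range (n-1), 1 / Real.sin ((k+1 : ℝ) * π / n)
      ≤ 1 + ((n:ℝ)-2) * ((n:ℝ)/2) := by
    have hmem : m - 1 ∈ Finset.range (n-1) := by
      simp only [Finset.mem_range]; omega
    rw [← Finset.add_sum_erase _ _ hmem]
    have hterm1 : ((m - 1 : ℕ) + 1 : ℝ) * π / n = π / 2 := by
      have h1 : ((m - 1 : ℕ) : ℝ) = (m:ℝ) - 1 := by
        have : 1 ≤ m := by omega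
        push_cast [this]; ring
      rw [h1, hNm]
      field_simp
      ring
    rw [hterm1, Real.sin_pi_div_two]
    have hbound : ∀ k ∈ (Finset.range (n-1)).erase (m-1),
        1 / Real.sin ((k+1 : ℝ) * π / n) ≤ (n:ℝ)/2 := by
      intro k hk
      have hk' : k < n - 1 := Finset.mem_range.mp (Finset.mem_of_mem_erase hk)
      have hk0 : (0:ℝ) ≤ (k:ℝ) := Nat.cast_nonneg k
      have hk2 : (k:ℝ) + 1 ≤ (n:ℝ) - 1 := by
        have h1 : (k:ℝ) + 1 ≤ ((n-1 : ℕ):ℝ) := by exact_mod_cast Nat.succ_le_of_lt hk'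
        have h3 : ((n-1:ℕ):ℝ) = (n:ℝ) - 1 := by
          have : 1 ≤ n := by omega
          push_cast [this]; ring
        rw [h3] at h1; exact h1
      set x : ℝ := ((k:ℝ)+1) * π / n with hx
      have hx0 : (0:ℝ) ≤ x := by positivity
      have hxπ : x ≤ π := by
        rw [hx, div_le_iff₀ hN0]
        nlinarith [mul_le_mul_of_nonneg_right hk2 hπ.le]
      have hsin : 2 / (n:ℝ) ≤ Real.sin x := by
        have h2 : 2/π * (π/(n:ℝ)) ≤ Real.sin x := by
          apply sin_ge_of_between hx0 hxπ
          · rw [hx, div_le_div_iff₀ hN0 hN0]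
            nlinarith [mul_nonneg (mul_nonneg hk0 hπ.le) hN0.le]
          · have he : π - ((k:ℝ)+1) * π / n = ((n:ℝ) - ((k:ℝ)+1)) * π / n := by
              field_simp
            rw [hx, he, div_le_div_iff₀ hN0 hN0]
            nlinarith [mul_le_mul_of_nonneg_right
              (show (1:ℝ) ≤ (n:ℝ) - ((k:ℝ)+1) by linarith)
              (mul_pos hπ hN0).le]
        have h3 : 2/π * (π/(n:ℝ)) = 2/(n:ℝ) := by field_simp
        rw [h3] at h2; exact h2
      have hsin0 : 0 < Real.sin x := by
        have : (0:ℝ) < 2/(n:ℝ) := by positivity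
        linarith
      rw [div_le_iff₀ hsin0]
      have h4 : ((n:ℝ)/2) * (2/(n:ℝ)) = 1 := by field_simp
      nlinarith [mul_le_mul_of_nonneg_left hsin (by positivity : (0:ℝ) ≤ (n:ℝ)/2)]
    have hsum := Finset.sum_le_card_nsmul _ _ _ hbound
    have hcard : ((Finset.range (n-1)).erase (m-1)).card = n - 2 := by
      rw [Finset.card_erase_of_mem hmem, Finset.card_range]
      omega
    rw [hcard, nsmul_eq_mul] at hsum
    have h2 : ((n-2:ℕ):ℝ) = (n:ℝ) - 2 := by
      have : 2 ≤ n := by omega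
      push_cast [this]; ring
    rw [h2] at hsum
    linarith
  -- per-term facts for RHS
  have hfact : ∀ k : ℕ, k < m →
      0 < Real.sin ((2*(k:ℝ)+1) * π / n / 2) ∧
      (2*(k:ℝ)+1)/(n:ℝ) ≤ Real.sin ((2*(k:ℝ)+1) * π / n / 2) ∧
      Real.cos ((2*(k:ℝ)+1) * π / n) = 1 - 2 * Real.sin ((2*(k:ℝ)+1) * π / n / 2)^2 := by
    intro k hk
    set x : ℝ := (2*(k:ℝ)+1) * π / n / 2 with hxdef
    have hk0 : (0:ℝ) ≤ (k:ℝ) := Nat.cast_nonneg k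
    have hk2 : 2*(k:ℝ)+1 ≤ (n:ℝ) - 1 := by
      have h1 : (k:ℝ) + 1 ≤ (m:ℝ) := by exact_mod_cast Nat.succ_le_of_lt hk
      rw [hNm]; linarith
    have hx0 : 0 < x := by rw [hxdef]; positivity
    have hxhalf : x ≤ π/2 := by
      rw [hxdef, div_le_div_iff₀ (by norm_num : (0:ℝ) < 2) (by norm_num : (0:ℝ) < 2),
        div_mul_eq_mul_div, div_le_iff₀ hN0]
      nlinarith [mul_le_mul_of_nonneg_right hk2 (by positivity : (0:ℝ) ≤ π*2)]
    have hsin : (2*(k:ℝ)+1)/(n:ℝ) ≤ Real.sin x := by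
      have h2 : 2/π * x ≤ Real.sin x := Real.mul_le_sin (le_of_lt hx0) hxhalf
      have h3 : 2/π * x = (2*(k:ℝ)+1)/(n:ℝ) := by
        rw [hxdef]; field_simp
      rw [h3] at h2; exact h2
    have hsin0 : 0 < Real.sin x := by
      have : (0:ℝ) < (2*(k:ℝ)+1)/(n:ℝ) := by positivity
      linarith
    refine ⟨hsin0, hsin, ?_⟩
    have h2x : (2*(k:ℝ)+1) * π / n = 2 * x := by rw [hxdef]; ring
    rw [h2x, Real.cos_two_mul, Real.cos_sq']
    ring
  -- RHS bound
  have hRHS : 8*(n:ℝ)^3/π^3 - 4/3*(n:ℝ) - ((n:ℝ)/2 - 1) * (2*(n:ℝ)/3)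
      ≤ ∑ k ∈ Finset.range m,
        Real.cos ((2*(k : ℝ)+1) * π / n) / (Real.sin ((2*(k : ℝ)+1) * π / n / 2))^3 := by
    have hm1 : m = (m - 1) + 1 := by omega
    rw [hm1, Finset.sum_range_succ']
    -- tail terms
    have htail : ∀ k ∈ Finset.range (m-1),
        -(2*(n:ℝ)/3) ≤ Real.cos ((2*((k+1:ℕ):ℝ) + 1) * π / n) /
          (Real.sin ((2*((k+1:ℕ):ℝ) + 1) * π / n / 2))^3 := by
      intro k hk
      have hkm : (k+1) < m := by
        have := Finset.mem_range.mp hk; omega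
      obtain ⟨hs0, hs1, hcos⟩ := hfact (k+1) hkm
      set s := Real.sin ((2*((k+1:ℕ):ℝ)+1) * π / n / 2) with hsdef
      have hsne : s ≠ 0 := ne_of_gt hs0
      have h3N : (3:ℝ) ≤ (2*((k+1:ℕ):ℝ)+1) := by
        have : (0:ℝ) ≤ (k:ℝ) := Nat.cast_nonneg k
        push_cast; linarith
      have hs3 : 3 ≤ s * (n:ℝ) := by
        have h4 : (3:ℝ)/(n:ℝ) ≤ (2*((k+1:ℕ):ℝ)+1)/(n:ℝ) := by gcongr
        have h5 : (3:ℝ)/(n:ℝ) ≤ s := le_trans h4 hs1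
        rw [div_le_iff₀ hN0] at h5
        linarith
      have h2s : 2/s ≤ 2*(n:ℝ)/3 := by
        rw [div_le_div_iff₀ hs0 (by norm_num : (0:ℝ) < 3)]
        nlinarith
      have heq : Real.cos ((2*((k+1:ℕ):ℝ)+1) * π / n) / s^3 = 1/s^3 - 2/s := by
        rw [hcos]
        field_simp
      rw [heq]
      have : 0 < 1/s^3 := by positivity
      linarith
    have htailsum : -(((n:ℝ)/2 - 1) * (2*(n:ℝ)/3))
        ≤ ∑ k ∈ Finset.range (m-1), Real.cos ((2*((k+1:ℕ):ℝ) + 1) * π / n) /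
          (Real.sin ((2*((k+1:ℕ):ℝ) + 1) * π / n / 2))^3 := by
      have hsum := Finset.card_nsmul_le_sum _ _ _ htail
      rw [Finset.card_range, nsmul_eq_mul] at hsum
      have hc : ((m-1:ℕ):ℝ) = (n:ℝ)/2 - 1 := by
        have h1 : ((m-1:ℕ):ℝ) = (m:ℝ) - 1 := by
          have : 1 ≤ m := by omega
          push_cast [this]; ring
        rw [h1, hNm]; ring
      rw [hc] at hsum
      calc -(((n:ℝ)/2 - 1) * (2*(n:ℝ)/3)) = ((n:ℝ)/2 - 1) * -(2*(n:ℝ)/3) := by ring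
        _ ≤ _ := hsum
    -- head term
    have hhead : 8*(n:ℝ)^3/π^3 - 4/3*(n:ℝ)
        ≤ Real.cos ((2*((0:ℕ):ℝ) + 1) * π / n) /
          (Real.sin ((2*((0:ℕ):ℝ) + 1) * π / n / 2))^3 := by
      obtain ⟨hs0, hs1, hcos⟩ := hfact 0 (by omega)
      set x : ℝ := (2*((0:ℕ):ℝ)+1) * π / n / 2 with hxdef
      set s := Real.sin x with hsdef
      have hsne : s ≠ 0 := ne_of_gt hs0
      have hxval : x = π/(2*(n:ℝ)) := by
        rw [hxdef]
        push_cast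
        ring
      have hx0 : 0 < x := by rw [hxval]; positivity
      have hx1 : x ≤ 1 := by
        rw [hxval, div_le_one (by positivity)]
        linarith
      -- lower bound for s
      have hkey : 0 ≤ 16*(n:ℝ)^2*π - π^3 - 48*(n:ℝ)^2 := by
        nlinarith [sq_nonneg ((n:ℝ) - 4)]
      have hcube : x - x^3/4 - 3/(2*(n:ℝ)) = (16*(n:ℝ)^2*π - π^3 - 48*(n:ℝ)^2)/(32*(n:ℝ)^3) := by
        rw [hxval]
        field_simp
        ring
      have hslow : 3/(2*(n:ℝ)) ≤ s := by
        have h1 := Real.sin_gt_sub_cube hx0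
        have h2 : 0 ≤ (16*(n:ℝ)^2*π - π^3 - 48*(n:ℝ)^2)/(32*(n:ℝ)^3) :=
          div_nonneg hkey (by positivity)
        rw [← hcube] at h2
        rw [hsdef]
        linarith [pow_pos hx0 3]
      -- upper bound for s
      have hsup : s ≤ π/(2*(n:ℝ)) := by
        have h1 := Real.sin_lt hx0
        rw [hsdef, ← hxval]
        linarith
      have hscube : s^3 ≤ (π/(2*(n:ℝ)))^3 :=
        pow_le_pow_left₀ (le_of_lt hs0) hsup 3
      have hinv : 8*(n:ℝ)^3/π^3 ≤ 1/s^3 := by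
        rw [div_le_div_iff₀ (by positivity) (by positivity : (0:ℝ) < s^3)]
        have h2 : (π/(2*(n:ℝ)))^3 * (8*(n:ℝ)^3) = π^3 := by
          field_simp; ring
        nlinarith [mul_le_mul_of_nonneg_right hscube (by positivity : (0:ℝ) ≤ 8*(n:ℝ)^3)]
      have h2s : 2/s ≤ 4/3*(n:ℝ) := by
        rw [div_le_iff₀ hs0]
        have h3 : 3 ≤ s * (2*(n:ℝ)) := by
          rw [div_le_iff₀ (by positivity : (0:ℝ) < 2*(n:ℝ))] at hslow
          linarith
        nlinarith
      have heq : Real.cos ((2*((0:ℕ):ℝ)+1) * π / n) / s^3 = 1/s^3 - 2/s := by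
        rw [hcos]
        field_simp
      rw [heq]
      linarith
    linarith [htailsum, hhead]
  -- final polynomial inequality
  have hc : 64000*(n:ℝ)^3/250047 ≤ 8*(n:ℝ)^3/π^3 := by
    rw [div_le_div_iff₀ (by norm_num : (0:ℝ) < 250047) (by positivity : (0:ℝ) < π^3)]
    nlinarith [mul_le_mul_of_nonneg_left hπ3.le (by positivity : (0:ℝ) ≤ 64000*(n:ℝ)^3)]
  have hfinal : (3/8 : ℝ) * (1 + ((n:ℝ)-2) * ((n:ℝ)/2))
      < (1/4 : ℝ) * (8*(n:ℝ)^3/π^3 - 4/3*(n:ℝ) - ((n:ℝ)/2 - 1) * (2*(n:ℝ)/3)) := by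
    nlinarith [hc, sq_nonneg ((n:ℝ) - 4),
      mul_nonneg (mul_nonneg (sub_nonneg.2 hN4) (sub_nonneg.2 hN4)) (sub_nonneg.2 hN4)]
  calc (3/8 : ℝ) * ∑ k ∈ Finset.range (n-1), 1 / Real.sin ((k+1 : ℝ) * π / n)
      ≤ (3/8 : ℝ) * (1 + ((n:ℝ)-2) * ((n:ℝ)/2)) := by linarith
    _ < (1/4 : ℝ) * (8*(n:ℝ)^3/π^3 - 4/3*(n:ℝ) - ((n:ℝ)/2 - 1) * (2*(n:ℝ)/3)) := hfinal
    _ ≤ _ := by linarith
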